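/- Let L be a modular lattice of finite height, equipped with a 2-coloring of its covering pairs (red/green) such that every interval of length 2 (diamond) is of one of four types: all covers red; all covers green; all lower covers red and all upper covers green; or exactly one lower cover green with the cover above it being the unique upper red cover. Then for any x ≤ y in L, the number of red coverings in a maximal chain from x to y is independent of the choice of maximal chain. -/

import Mathlib

/-- A red/green bi-coloring of the coverings of a lattice (`red a b` meaning the covering
`[a, b]` is colored red, `¬ red a b` meaning it is green) is *matroidal* if every interval
of height 2 (diamond) is of one of four types: all coverings red; all coverings green;
all lower coverings red and all upper coverings green; or exactly one lower covering green
with the covering above it being the unique red upper covering. -/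
def IsMatroidalColoring {L : Type*} [Lattice L] (red : L → L → Prop) : Prop :=
  ∀ u w : L, (∃ v, u ⋖ v ∧ v ⋖ w) →
    ((∀ v, u ⋖ v → v ⋖ w → red u v ∧ red v w) ∨
     (∀ v, u ⋖ v → v ⋖ w → ¬ red u v ∧ ¬ red v w) ∨
     (∀ v, u ⋖ v → v ⋖ w → red u v ∧ ¬ red v w) ∨
     (∃ v₀, u ⋖ v₀ ∧ v₀ ⋖ w ∧ ¬ red u v₀ ∧ red v₀ w ∧
        ∀ v, u ⋖ v → v ⋖ w → v ≠ v₀ → red u v ∧ ¬ red v w))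

/-- A lattice has finite height if the lengths of its strict chains are bounded. -/
def FiniteHeight (L : Type*) [Lattice L] : Prop :=
  ∃ n : ℕ, ∀ c : List L, c.Chain' (· < ·) → c.length ≤ n + 1

open Classical in
/-- number of red steps in a list -/
noncomputable def rcount {L : Type*} (red : L → L → Prop) : List L → ℕ
  | [] => 0
  | [_] => 0
  | a :: b :: t => (if red a b then 1 else 0) + rcount red (b :: t)


open Classical in
lemma rcount_cons_cons {L : Type*} (red : L → L → Prop) (a b : L) (t : List L) :
    rcount red (a :: b :: t) = (if red a b then 1 else 0) + rcount red (b :: t) := by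
  rfl

open Classical in
lemma rcount_cons_of_head? {L : Type*} (red : L → L → Prop) (a b : L) (l : List L)
    (h : l.head? = some b) :
    rcount red (a :: l) = (if red a b then 1 else 0) + rcount red l := by
  match l, h with
  | b' :: t, h =>
    have hb : b' = b := by simpa using h
    subst hb
    exact rcount_cons_cons red a b' t

section Helpers
variable {L : Type*} [Lattice L]

lemma head_le_of_chain' : ∀ (l : List L) (a y : L),
    (a :: l).Chain' (· < ·) → (a :: l).getLast? = some y → a ≤ y := by
  intro l
  induction l with
  | nil => intro a y _ h; simp at h; exact le_of_eq h
  | cons b t ih =>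
    intro a y hc hl
    rw [List.getLast?_cons_cons] at hl
    simp only [List.Chain', List.isChain_cons_cons] at hc
    exact le_of_lt (lt_of_lt_of_le hc.1 (ih b y hc.2 hl))

lemma head_lt_of_chain' (t : List L) (a b y : L)
    (hc : (a :: b :: t).Chain' (· < ·)) (hl : (a :: b :: t).getLast? = some y) :
    a < y := by
  rw [List.getLast?_cons_cons] at hl
  simp only [List.Chain', List.isChain_cons_cons] at hc
  exact lt_of_lt_of_le hc.1 (head_le_of_chain' t b y hc.2 hl)

lemma exists_min (hfin : FiniteHeight L) (S : Set L) (hS : S.Nonempty) :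
    ∃ z ∈ S, ∀ z' ∈ S, ¬ z' < z := by
  by_contra h
  push_neg at h
  obtain ⟨n, hn⟩ := hfin
  obtain ⟨z₀, hz₀⟩ := hS
  choose F hF1 hF2 using h
  let f : ℕ → {z : L // z ∈ S} := fun m =>
    Nat.rec ⟨z₀, hz₀⟩ (fun _ p => ⟨F p.1 p.2, hF1 p.1 p.2⟩) m
  have hf : ∀ m, (f (m + 1)).1 < (f m).1 := fun m => hF2 (f m).1 (f m).2
  have hchain : (List.ofFn (fun i : Fin (n + 2) => (f (n + 1 - i)).1)).Chain' (· < ·) := by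
    simp only [List.Chain']; rw [List.isChain_iff_getElem]
    intro i hi
    simp only [List.length_ofFn] at hi
    rw [List.getElem_ofFn, List.getElem_ofFn]
    simp only [Fin.cast_mk]
    have h1 : n + 1 - (i : ℕ) = (n - i) + 1 := by omega
    have h2 : n + 1 - ((i : ℕ) + 1) = n - i := by omega
    simp only [h1, h2]
    exact hf (n - i)
  have := hn _ hchain
  simp [List.length_ofFn] at this

lemma exists_covChain (hfin : FiniteHeight L) (u w : L) (huw : u ≤ w) :
    ∃ c : List L, c.Chain' (· ⋖ ·) ∧ c.head? = some u ∧ c.getLast? = some w := by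
  obtain ⟨n, hn⟩ := hfin
  have key : ∀ N : ℕ, ∀ u w : L, u ≤ w →
      (∀ c : List L, c.Chain' (· < ·) → (∀ a ∈ c, u ≤ a ∧ a ≤ w) → c.length ≤ N) →
      ∃ c : List L, c.Chain' (· ⋖ ·) ∧ c.head? = some u ∧ c.getLast? = some w := by
    intro N
    induction N with
    | zero =>
      intro u w huw hb
      have := hb [u] (by simp [List.Chain']) (by simp [huw])
      simp at this
    | succ N ih =>
      intro u w huw hb
      rcases eq_or_lt_of_le huw with rfl | hlt
      · exact ⟨[u], by simp [List.Chain'], rfl, rfl⟩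
      · obtain ⟨z, ⟨hz1, hz2⟩, hzmin⟩ :=
          exists_min ⟨n, hn⟩ {z : L | u < z ∧ z ≤ w} ⟨w, hlt, le_rfl⟩
        have hcov : u ⋖ z := by
          refine ⟨hz1, fun c hc1 hc2 => ?_⟩
          exact hzmin c ⟨hc1, hc2.le.trans hz2⟩ hc2
        obtain ⟨c, hcc, hch, hcl⟩ := ih z w hz2 (by
          intro c hc hmem
          match c with
          | [] => simp
          | a :: t =>
            have h1 : (u :: a :: t).Chain' (· < ·) := by
              simp only [List.Chain', List.isChain_cons_cons]
              exact ⟨lt_of_lt_of_le hz1 (hmem a (by simp)).1, hc⟩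
            have := hb (u :: a :: t) h1 (by
              intro x hx
              simp only [List.mem_cons] at hx
              rcases hx with rfl | hx
              · exact ⟨le_rfl, huw⟩
              · have hx' : x ∈ a :: t := by simpa using hx
                exact ⟨(hz1.le.trans (hmem x hx').1), (hmem x hx').2⟩)
            simpa using this)
        match c, hch with
        | z' :: t, hch =>
          have hz' : z' = z := by simpa using hch
          subst hz'
          refine ⟨u :: z' :: t, ?_, rfl, ?_⟩
          · simp only [List.Chain', List.isChain_cons_cons]; exact ⟨hcov, hcc⟩
          · rw [List.getLast?_cons_cons]; exact hcl
  exact key (n + 1) u w huw (fun c hc _ => hn c hc)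

open Classical in
lemma diamond_lemma {red : L → L → Prop} (hred : IsMatroidalColoring red)
    {a b b' v : L} (hab : a ⋖ b) (hab' : a ⋖ b') (hbv : b ⋖ v) (hb'v : b' ⋖ v) :
    ((if red a b then 1 else 0) + (if red b v then 1 else 0) : ℕ) =
      (if red a b' then 1 else 0) + (if red b' v then 1 else 0) := by
  rcases hred a v ⟨b, hab, hbv⟩ with h | h | h | ⟨v₀, h1, h2, h3, h4, h5⟩
  · obtain ⟨r1, r2⟩ := h b hab hbv
    obtain ⟨r3, r4⟩ := h b' hab' hb'v
    simp [r1, r2, r3, r4]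
  · obtain ⟨r1, r2⟩ := h b hab hbv
    obtain ⟨r3, r4⟩ := h b' hab' hb'v
    simp [r1, r2, r3, r4]
  · obtain ⟨r1, r2⟩ := h b hab hbv
    obtain ⟨r3, r4⟩ := h b' hab' hb'v
    simp [r1, r2, r3, r4]
  · have w : ∀ z, a ⋖ z → z ⋖ v →
        ((if red a z then 1 else 0) + (if red z v then 1 else 0) : ℕ) = 1 := by
      intro z hz1 hz2
      by_cases hz : z = v₀
      · subst hz; simp [h3, h4]
      · obtain ⟨r1, r2⟩ := h5 z hz1 hz2 hz
        simp [r1, r2]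
    rw [w b hab hbv, w b' hab' hb'v]


lemma main_lemma [IsModularLattice L] (hfin : FiniteHeight L) (red : L → L → Prop)
    (hred : IsMatroidalColoring red) :
    ∀ N : ℕ, ∀ c d : List L, ∀ x y : L, c.length ≤ N →
      c.Chain' (· ⋖ ·) → d.Chain' (· ⋖ ·) →
      c.head? = some x → c.getLast? = some y →
      d.head? = some x → d.getLast? = some y →
      rcount red c = rcount red d ∧ c.length = d.length := by
  intro N
  induction N with
  | zero =>
    intro c d x y hlen _ _ hcx _ _ _
    match c with
    | [] => simp at hcx
    | _ :: _ => simp at hlen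
  | succ N ih =>
    intro c d x y hlen hc hd hcx hcy hdx hdy
    match c, d with
    | [], _ => simp at hcx
    | _, [] => simp at hdx
    | [a], [a'] => exact ⟨rfl, rfl⟩
    | [a], a' :: b' :: t' =>
      exfalso
      have ha : a = x := by simpa using hcx
      have hy : a = y := by simpa using hcy
      have ha' : a' = x := by simpa using hdx
      have hlt : a' < y := head_lt_of_chain' t' a' b' y (hd.imp fun _ _ h => h.lt) hdy
      subst ha; subst ha'
      rw [← hy] at hlt; exact lt_irrefl _ hlt
    | a :: b :: t, [a'] =>
      exfalso
      have ha : a = x := by simpa using hcx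
      have ha' : a' = x := by simpa using hdx
      have hy : a' = y := by simpa using hdy
      have hlt : a < y := head_lt_of_chain' t a b y (hc.imp fun _ _ h => h.lt) hcy
      subst ha; subst ha'
      rw [← hy] at hlt; exact lt_irrefl _ hlt
    | a :: b :: t, a' :: b' :: t' =>
      have ha : a = x := by simpa using hcx
      subst ha
      have ha' : a' = a := by simpa using hdx
      subst ha'
      simp only [List.Chain', List.isChain_cons_cons] at hc hd
      rw [List.getLast?_cons_cons] at hcy hdy
      by_cases hbb : b = b'
      · subst hbb
        obtain ⟨hr, hl⟩ := ih (b :: t) (b :: t') b y (by simp at hlen ⊢; omega)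
          hc.2 hd.2 rfl hcy rfl hdy
        refine ⟨?_, by simp at hl ⊢; omega⟩
        rw [rcount_cons_cons, rcount_cons_cons, hr]
      · have hab : a' ⋖ b := hc.1
        have hab' : a' ⋖ b' := hd.1
        have hinf : b ⊓ b' = a' := by
          rcases lt_or_eq_of_le (inf_le_left : b ⊓ b' ≤ b) with hlt | heq
          · have hle : a' ≤ b ⊓ b' := le_inf hab.le hab'.le
            rcases lt_or_eq_of_le hle with hlt2 | heq2
            · exact absurd hlt (hab.2 hlt2)
            · exact heq2.symm
          · exfalso
            have hbb' : b ≤ b' := heq ▸ inf_le_right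
            rcases lt_or_eq_of_le hbb' with h2 | h2
            · exact hab'.2 hab.lt h2
            · exact hbb h2
        have hb'v : b' ⋖ b ⊔ b' := covBy_sup_of_inf_covBy_left (hinf ▸ hab)
        have hbv : b ⋖ b ⊔ b' := covBy_sup_of_inf_covBy_right (hinf ▸ hab')
        have hby : b ≤ y := head_le_of_chain' t b y (hc.2.imp fun _ _ h => h.lt) hcy
        have hb'y : b' ≤ y := head_le_of_chain' t' b' y (hd.2.imp fun _ _ h => h.lt) hdy
        obtain ⟨e, hec, heh, hel⟩ := exists_covChain hfin (b ⊔ b') y (sup_le hby hb'y)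
        match e, heh with
        | v' :: e₂, heh =>
          have hv' : v' = b ⊔ b' := by simpa using heh
          subst hv'
          obtain ⟨hr1, hl1⟩ := ih (b :: t) (b :: (b ⊔ b') :: e₂) b y
            (by simp at hlen ⊢; omega) hc.2
            (by simp only [List.Chain', List.isChain_cons_cons]; exact ⟨hbv, hec⟩) rfl hcy rfl
            (by rw [List.getLast?_cons_cons]; exact hel)
          obtain ⟨hr2, hl2⟩ := ih (b' :: (b ⊔ b') :: e₂) (b' :: t') b' y
            (by simp at hl1 hlen ⊢; omega)
            (by simp only [List.Chain', List.isChain_cons_cons]; exact ⟨hb'v, hec⟩) hd.2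
            rfl (by rw [List.getLast?_cons_cons]; exact hel) rfl hdy
          refine ⟨?_, by simp at hl1 hl2 ⊢; omega⟩
          rw [rcount_cons_cons, rcount_cons_cons, hr1, ← hr2,
            rcount_cons_cons, rcount_cons_cons]
          have hdia := diamond_lemma hred hab hab' hbv hb'v
          omega

end Helpers

section Conv
variable {L : Type*}

lemma head?_ofFn (k : ℕ) (f : Fin (k + 1) → L) : (List.ofFn f).head? = some (f 0) := by
  rw [List.ofFn_succ]; rfl

lemma getLast?_ofFn : ∀ (k : ℕ) (f : Fin (k + 1) → L),
    (List.ofFn f).getLast? = some (f (Fin.last k)) := by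
  intro k
  induction k with
  | zero => intro f; simp [List.ofFn_succ]
  | succ k ih =>
    intro f
    have h2 : List.ofFn (fun i : Fin (k + 1) => f i.succ) =
        (fun i : Fin (k + 1) => f i.succ) 0 :: List.ofFn (fun i : Fin k => f i.succ.succ) :=
      List.ofFn_succ
    rw [List.ofFn_succ, h2, List.getLast?_cons_cons, ← h2,
      ih (fun i => f i.succ), Fin.succ_last]

open Classical in
lemma rcount_ofFn (red : L → L → Prop) : ∀ (k : ℕ) (f : Fin (k + 1) → L),
    rcount red (List.ofFn f) =
      ∑ i : Fin k, (if red (f i.castSucc) (f i.succ) then 1 else 0) := by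
  intro k
  induction k with
  | zero => intro f; simp [List.ofFn_succ, rcount]
  | succ k ih =>
    intro f
    rw [List.ofFn_succ,
      rcount_cons_of_head? red _ _ _ (head?_ofFn k (fun i => f i.succ)),
      ih (fun i => f i.succ), Fin.sum_univ_succ]
    congr 1

open Classical in
lemma card_subtype_eq_sum (k : ℕ) (p : Fin k → Prop) :
    Nat.card {i : Fin k // p i} = ∑ i : Fin k, (if p i then 1 else 0) := by
  rw [Nat.card_eq_fintype_card, Fintype.card_subtype, Finset.card_filter]

end Conv

/-- In a modular lattice of finite height with a matroidal bi-coloring of its coverings,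
the number of red coverings in a maximal chain from `x` to `y` is independent of the choice
of maximal chain. -/
theorem redCount_well_defined {L : Type*} [Lattice L] [IsModularLattice L]
    (hfin : FiniteHeight L) (red : L → L → Prop) (hred : IsMatroidalColoring red)
    (x y : L) (hxy : x ≤ y)
    (k m : ℕ) (f : Fin (k + 1) → L) (g : Fin (m + 1) → L)
    (hf0 : f 0 = x) (hfk : f (Fin.last k) = y)
    (hg0 : g 0 = x) (hgm : g (Fin.last m) = y)
    (hf : ∀ i : Fin k, f i.castSucc ⋖ f i.succ)
    (hg : ∀ i : Fin m, g i.castSucc ⋖ g i.succ) :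
    Nat.card {i : Fin k // red (f i.castSucc) (f i.succ)} =
      Nat.card {i : Fin m // red (g i.castSucc) (g i.succ)} := by
  have hcf : (List.ofFn f).Chain' (· ⋖ ·) := by
    simp only [List.Chain']; rw [List.isChain_iff_getElem]
    intro i hi
    simp only [List.length_ofFn] at hi
    rw [List.getElem_ofFn, List.getElem_ofFn]
    exact hf ⟨i, by omega⟩
  have hcg : (List.ofFn g).Chain' (· ⋖ ·) := by
    simp only [List.Chain']; rw [List.isChain_iff_getElem]
    intro i hi
    simp only [List.length_ofFn] at hi
    rw [List.getElem_ofFn, List.getElem_ofFn]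
    exact hg ⟨i, by omega⟩
  obtain ⟨hr, -⟩ := main_lemma hfin red hred (List.ofFn f).length (List.ofFn f)
    (List.ofFn g) x y le_rfl hcf hcg
    (by rw [head?_ofFn, hf0]) (by rw [getLast?_ofFn, hfk])
    (by rw [head?_ofFn, hg0]) (by rw [getLast?_ofFn, hgm])
  rw [rcount_ofFn red k f, rcount_ofFn red m g] at hr
  rw [card_subtype_eq_sum, card_subtype_eq_sum]
  exact hr
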